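/- Let l ∈ ℕ, C > 0, t, λ ∈ ℕ with 2^l + 2l − 1 ≤ λ. Suppose η and η̄ both satisfy discretized hierarchical max-pooling models of level l and order t with the same grid points, built from functions g_{k,s}^{(i)} : ℝ⁴ → [0,1] (for k ≥ 1) and g_{0,s}^{(i)} : [0,1] → [0,1], respectively ḡ_{k,s}^{(i)} : ℝ⁴ → ℝ₊ with ‖ḡ_{k,s}^{(i)}‖_{[0,2]⁴,∞} ≤ 2 and ḡ_{0,s}^{(i)} : [0,1] → [0,2]. If each restriction g_{k,s}^{(i)}|_{[0,2]⁴} is Lipschitz with constant C in the maximum metric, then for all x ∈ [0,1]^{G_λ}: |η(x) − η̄(x)| ≤ (C+1)^l · max over all i,j,k,s of { ‖g_{0,j}^{(i)} − ḡ_{0,j}^{(i)}‖_{[0,1],∞}, ‖g_{k,s}^{(i)} − ḡ_{k,s}^{(i)}‖_{[0,2]⁴,∞} }. -/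

import Mathlib

open scoped Classical

/-- The grid `G_λ = {((i−1/2)/λ − 1/2, (j−1/2)/λ − 1/2) : i,j ∈ {1,…,λ}} ⊂ ℝ²`. -/
noncomputable def gridF (lam : ℕ) : Finset (ℝ × ℝ) :=
  ((Finset.Icc 1 lam) ×ˢ (Finset.Icc 1 lam)).image
    (fun p => (((p.1 : ℝ) - 1 / 2) / lam - 1 / 2, ((p.2 : ℝ) - 1 / 2) / lam - 1 / 2))

/-- The index set `I^{(l)} = {−(2^{l−1}+l−1)/λ, …, (2^{l−1}+l−1)/λ}²` (steps `1/λ`). -/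
noncomputable def idxF (lam l : ℕ) : Finset (ℝ × ℝ) :=
  ((Finset.Icc (-((2 ^ (l - 1) + l - 1 : ℕ) : ℤ)) ((2 ^ (l - 1) + l - 1 : ℕ) : ℤ)) ×ˢ
      (Finset.Icc (-((2 ^ (l - 1) + l - 1 : ℕ) : ℤ)) ((2 ^ (l - 1) + l - 1 : ℕ) : ℤ))).image
    (fun p => ((p.1 : ℝ) / lam, (p.2 : ℝ) / lam))

/-- The set of valid centers: `u ∈ G_λ` with `u + I^{(l)} ⊆ G_λ`. -/
noncomputable def validF (lam l : ℕ) : Finset (ℝ × ℝ) :=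
  (gridF lam).filter (fun u => ∀ v ∈ idxF lam l, u + v ∈ gridF lam)

/-- The recursively defined functions of a discretized hierarchical model:
`fbar g0 g ip x k s u` is `f̄_{k,s}` applied to the image `x` restricted to
`u + I^{(k)}`, where `g0 s = ḡ_{0,s}`, `g k s = ḡ_{k,s}` and `ip k s'` is the
grid point `i_{k,s'}` shifting the subpart of child `(k,s')`. -/
noncomputable def fbar (g0 : ℕ → ℝ → ℝ) (g : ℕ → ℕ → (Fin 4 → ℝ) → ℝ)
    (ip : ℕ → ℕ → ℝ × ℝ) (x : ℝ × ℝ → ℝ) : ℕ → ℕ → (ℝ × ℝ) → ℝ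
  | 0, s => fun u => g0 s (x u)
  | (k + 1), s => fun u =>
      g (k + 1) s (fun j =>
        fbar g0 g ip x k (4 * (s - 1) + (j : ℕ) + 1)
          (u + ip k (4 * (s - 1) + (j : ℕ) + 1)))

/-- Radius (in grid steps) of the window needed by a level-`k` function. -/
def hmRad : ℕ → ℕ
  | 0 => 0
  | (k + 1) => 2 ^ k + k

lemma hmRad_step (k : ℕ) :
    (if k = 0 then 1 else 2 ^ (k - 1) + 1) + hmRad k = hmRad (k + 1) := by
  cases k with
  | zero => simp [hmRad]
  | succ m => simp [hmRad, pow_succ]; ring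

theorem discretized_model_approx_aux
    (lam : ℕ) (C : ℝ) (hC : 0 < C)
    (g0 gb0 : ℕ → ℕ → ℝ → ℝ)
    (g gb : ℕ → ℕ → ℕ → (Fin 4 → ℝ) → ℝ)
    (ip : ℕ → ℕ → ℕ → ℝ × ℝ)
    (hip : ∀ i k s, ∃ a b : ℤ,
      a.natAbs ≤ (if k = 0 then 1 else 2 ^ (k - 1) + 1) ∧
      b.natAbs ≤ (if k = 0 then 1 else 2 ^ (k - 1) + 1) ∧
      ip i k s = ((a : ℝ) / lam, (b : ℝ) / lam))
    (hg0 : ∀ i s x, x ∈ Set.Icc (0 : ℝ) 1 → g0 i s x ∈ Set.Icc (0 : ℝ) 1)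
    (hg : ∀ i k s v, g i k s v ∈ Set.Icc (0 : ℝ) 1)
    (hgb0 : ∀ i s x, x ∈ Set.Icc (0 : ℝ) 1 → gb0 i s x ∈ Set.Icc (0 : ℝ) 2)
    (hgbpos : ∀ i k s v, 0 ≤ gb i k s v)
    (hgb2 : ∀ i k s v, (∀ j, v j ∈ Set.Icc (0 : ℝ) 2) → gb i k s v ≤ 2)
    (hLip : ∀ i k s v w, (∀ j, v j ∈ Set.Icc (0 : ℝ) 2) → (∀ j, w j ∈ Set.Icc (0 : ℝ) 2) →
      |g i k s v - g i k s w|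
        ≤ C * Finset.univ.sup' Finset.univ_nonempty (fun j : Fin 4 => |v j - w j|))
    (ε : ℝ) (hε : 0 ≤ ε)
    (hε0 : ∀ i s x, x ∈ Set.Icc (0 : ℝ) 1 → |g0 i s x - gb0 i s x| ≤ ε)
    (hεk : ∀ i k s v, (∀ j, v j ∈ Set.Icc (0 : ℝ) 2) → |g i k s v - gb i k s v| ≤ ε)
    (x : ℝ × ℝ → ℝ) (hx : ∀ u ∈ gridF lam, x u ∈ Set.Icc (0 : ℝ) 1) :
    ∀ (k i s : ℕ) (u : ℝ × ℝ),
      (∀ a b : ℤ, a.natAbs ≤ hmRad k → b.natAbs ≤ hmRad k →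
        u + ((a : ℝ) / lam, (b : ℝ) / lam) ∈ gridF lam) →
      fbar (g0 i) (g i) (ip i) x k s u ∈ Set.Icc (0 : ℝ) 1 ∧
      fbar (gb0 i) (gb i) (ip i) x k s u ∈ Set.Icc (0 : ℝ) 2 ∧
      |fbar (g0 i) (g i) (ip i) x k s u - fbar (gb0 i) (gb i) (ip i) x k s u|
        ≤ (C + 1) ^ k * ε := by
  intro k
  induction k with
  | zero =>
    intro i s u hu
    have hu0 : u ∈ gridF lam := by
      have := hu 0 0 (by simp) (by simp)
      simpa [Prod.mk_zero_zero] using this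
    have hx0 := hx u hu0
    exact ⟨hg0 i s _ hx0, hgb0 i s _ hx0, by simpa [fbar] using hε0 i s _ hx0⟩
  | succ k ihk =>
    intro i s u hu
    set v : Fin 4 → ℝ := fun j => fbar (g0 i) (g i) (ip i) x k (4 * (s - 1) + (j : ℕ) + 1)
      (u + ip i k (4 * (s - 1) + (j : ℕ) + 1)) with hv
    set w : Fin 4 → ℝ := fun j => fbar (gb0 i) (gb i) (ip i) x k (4 * (s - 1) + (j : ℕ) + 1)
      (u + ip i k (4 * (s - 1) + (j : ℕ) + 1)) with hw
    have hchild : ∀ j : Fin 4, v j ∈ Set.Icc (0 : ℝ) 1 ∧ w j ∈ Set.Icc (0 : ℝ) 2 ∧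
        |v j - w j| ≤ (C + 1) ^ k * ε := by
      intro j
      obtain ⟨a0, b0, ha0, hb0, hip0⟩ := hip i k (4 * (s - 1) + (j : ℕ) + 1)
      refine ihk i _ _ ?_
      intro a b ha hb
      have key := hu (a0 + a) (b0 + b)
        (by have := hmRad_step k; omega) (by have := hmRad_step k; omega)
      have harith : u + ip i k (4 * (s - 1) + (j : ℕ) + 1) + ((a : ℝ) / lam, (b : ℝ) / lam)
          = u + (((a0 + a : ℤ) : ℝ) / lam, ((b0 + b : ℤ) : ℝ) / lam) := by
        rw [hip0]
        apply Prod.ext <;> simp <;> push_cast <;> ring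
      rw [harith]; exact key
    have hv1 : ∀ j, v j ∈ Set.Icc (0 : ℝ) 1 := fun j => (hchild j).1
    have hv2 : ∀ j, v j ∈ Set.Icc (0 : ℝ) 2 := fun j =>
      ⟨(hv1 j).1, le_trans (hv1 j).2 one_le_two⟩
    have hw2 : ∀ j, w j ∈ Set.Icc (0 : ℝ) 2 := fun j => (hchild j).2.1
    have hd : ∀ j, |v j - w j| ≤ (C + 1) ^ k * ε := fun j => (hchild j).2.2
    refine ⟨hg i (k + 1) s v, ⟨hgbpos i (k + 1) s w, hgb2 i (k + 1) s w hw2⟩, ?_⟩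
    have h1 : |g i (k + 1) s v - g i (k + 1) s w| ≤ C * ((C + 1) ^ k * ε) := by
      refine le_trans (hLip i (k + 1) s v w hv2 hw2) ?_
      refine mul_le_mul_of_nonneg_left ?_ hC.le
      exact Finset.sup'_le _ _ fun j _ => hd j
    have h2 : |g i (k + 1) s w - gb i (k + 1) s w| ≤ ε := hεk i (k + 1) s w hw2
    have hcp : (1 : ℝ) ≤ (C + 1) ^ k := one_le_pow₀ (by linarith)
    calc |fbar (g0 i) (g i) (ip i) x (k + 1) s u - fbar (gb0 i) (gb i) (ip i) x (k + 1) s u|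
        = |g i (k + 1) s v - gb i (k + 1) s w| := by rw [fbar, fbar]
      _ ≤ |g i (k + 1) s v - g i (k + 1) s w| + |g i (k + 1) s w - gb i (k + 1) s w| :=
          abs_sub_le _ _ _
      _ ≤ C * ((C + 1) ^ k * ε) + ε := add_le_add h1 h2
      _ ≤ (C + 1) ^ (k + 1) * ε := by
          have : ε ≤ (C + 1) ^ k * ε := le_mul_of_one_le_left hε hcp
          rw [pow_succ]
          nlinarith [this]

/-- Lemma 3: if `η` and `η̄` satisfy discretized hierarchical max-pooling models
of level `l` and order `t` with the same grid points, built from `[0,1]`-valued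
functions `g_{k,s}^{(i)}` whose restrictions to `[0,2]⁴` are `C`-Lipschitz in the
maximum metric, respectively nonnegative functions `ḡ_{k,s}^{(i)}` bounded by `2`
on `[0,2]⁴` (and `ḡ_{0,s}^{(i)} : [0,1] → [0,2]`), then for every image
`x ∈ [0,1]^{G_λ}` and every `ε` dominating all the sup-norm distances
`‖g_{0,j}^{(i)} − ḡ_{0,j}^{(i)}‖_{[0,1],∞}` and `‖g_{k,s}^{(i)} − ḡ_{k,s}^{(i)}‖_{[0,2]⁴,∞}`
one has `|η(x) − η̄(x)| ≤ (C+1)^l · ε`. -/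
theorem discretized_model_approx
    (l lam t : ℕ) (hl : 1 ≤ l) (ht : 1 ≤ t) (C : ℝ) (hC : 0 < C)
    (hlam : 2 ^ l + 2 * l - 1 ≤ lam)
    (g0 gb0 : ℕ → ℕ → ℝ → ℝ)                -- (i, s) ↦ g_{0,s}^{(i)}, ḡ_{0,s}^{(i)}
    (g gb : ℕ → ℕ → ℕ → (Fin 4 → ℝ) → ℝ)    -- (i, k, s) ↦ g_{k,s}^{(i)}, ḡ_{k,s}^{(i)}
    (ip : ℕ → ℕ → ℕ → ℝ × ℝ)                -- common grid points i_{k,s}^{(i)}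
    (hip : ∀ i k s, ∃ a b : ℤ,
      a.natAbs ≤ (if k = 0 then 1 else 2 ^ (k - 1) + 1) ∧
      b.natAbs ≤ (if k = 0 then 1 else 2 ^ (k - 1) + 1) ∧
      ip i k s = ((a : ℝ) / lam, (b : ℝ) / lam))
    (hg0 : ∀ i s x, x ∈ Set.Icc (0 : ℝ) 1 → g0 i s x ∈ Set.Icc (0 : ℝ) 1)
    (hg : ∀ i k s v, g i k s v ∈ Set.Icc (0 : ℝ) 1)
    (hgb0 : ∀ i s x, x ∈ Set.Icc (0 : ℝ) 1 → gb0 i s x ∈ Set.Icc (0 : ℝ) 2)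
    (hgbpos : ∀ i k s v, 0 ≤ gb i k s v)
    (hgb2 : ∀ i k s v, (∀ j, v j ∈ Set.Icc (0 : ℝ) 2) → gb i k s v ≤ 2)
    (hLip : ∀ i k s v w, (∀ j, v j ∈ Set.Icc (0 : ℝ) 2) → (∀ j, w j ∈ Set.Icc (0 : ℝ) 2) →
      |g i k s v - g i k s w|
        ≤ C * Finset.univ.sup' Finset.univ_nonempty (fun j : Fin 4 => |v j - w j|))
    (ε : ℝ)
    (hε0 : ∀ i s x, x ∈ Set.Icc (0 : ℝ) 1 → |g0 i s x - gb0 i s x| ≤ ε)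
    (hεk : ∀ i k s v, (∀ j, v j ∈ Set.Icc (0 : ℝ) 2) → |g i k s v - gb i k s v| ≤ ε)
    (x : ℝ × ℝ → ℝ) (hx : ∀ u ∈ gridF lam, x u ∈ Set.Icc (0 : ℝ) 1)
    (hne : ((validF lam l) ×ˢ (Finset.Icc 1 t)).Nonempty) :
    |((validF lam l) ×ˢ (Finset.Icc 1 t)).sup' hne
        (fun p => fbar (g0 p.2) (g p.2) (ip p.2) x l 1 p.1)
      - ((validF lam l) ×ˢ (Finset.Icc 1 t)).sup' hne
        (fun p => fbar (gb0 p.2) (gb p.2) (ip p.2) x l 1 p.1)|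
      ≤ (C + 1) ^ l * ε := by
  have hε : 0 ≤ ε := le_trans (abs_nonneg _) (hε0 0 0 0 (by norm_num))
  obtain ⟨m, rfl⟩ : ∃ m, l = m + 1 := ⟨l - 1, (Nat.succ_pred_eq_of_pos hl).symm⟩
  have key := discretized_model_approx_aux lam C hC g0 gb0 g gb ip hip hg0 hg hgb0
    hgbpos hgb2 hLip ε hε hε0 hεk x hx (m + 1)
  have hpt : ∀ p ∈ (validF lam (m + 1)) ×ˢ (Finset.Icc 1 t),
      |fbar (g0 p.2) (g p.2) (ip p.2) x (m + 1) 1 p.1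
        - fbar (gb0 p.2) (gb p.2) (ip p.2) x (m + 1) 1 p.1| ≤ (C + 1) ^ (m + 1) * ε := by
    intro p hp
    rw [Finset.mem_product] at hp
    have hval := hp.1
    rw [validF, Finset.mem_filter] at hval
    refine (key p.2 1 p.1 ?_).2.2
    intro a b ha hb
    refine hval.2 _ ?_
    rw [idxF, Finset.mem_image]
    refine ⟨(a, b), ?_, rfl⟩
    rw [Finset.mem_product, Finset.mem_Icc, Finset.mem_Icc]
    have hr : hmRad (m + 1) = 2 ^ ((m + 1) - 1) + (m + 1) - 1 := by
      simp [hmRad]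
    rw [hr] at ha hb
    omega
  rw [abs_sub_le_iff]
  constructor
  · rw [sub_le_iff_le_add]
    refine Finset.sup'_le _ _ fun p hp => ?_
    have h1 := hpt p hp
    have h2 : fbar (gb0 p.2) (gb p.2) (ip p.2) x (m + 1) 1 p.1
        ≤ ((validF lam (m + 1)) ×ˢ (Finset.Icc 1 t)).sup' hne
          (fun p => fbar (gb0 p.2) (gb p.2) (ip p.2) x (m + 1) 1 p.1) :=
      Finset.le_sup' (fun p => fbar (gb0 p.2) (gb p.2) (ip p.2) x (m + 1) 1 p.1) hp
    rw [abs_sub_le_iff] at h1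
    linarith [h1.1]
  · rw [sub_le_iff_le_add]
    refine Finset.sup'_le _ _ fun p hp => ?_
    have h1 := hpt p hp
    have h2 : fbar (g0 p.2) (g p.2) (ip p.2) x (m + 1) 1 p.1
        ≤ ((validF lam (m + 1)) ×ˢ (Finset.Icc 1 t)).sup' hne
          (fun p => fbar (g0 p.2) (g p.2) (ip p.2) x (m + 1) 1 p.1) :=
      Finset.le_sup' (fun p => fbar (g0 p.2) (g p.2) (ip p.2) x (m + 1) 1 p.1) hp
    rw [abs_sub_le_iff] at h1
    linarith [h1.2]
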